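/- Let R be a field and c ∈ M_n(R) with m_c(x) = p_c(x) (minimal polynomial equals characteristic polynomial). Then R^n ≅ R[c] as R[c]-modules, i.e., R^n is a cyclic module over R[c]. -/

import Mathlib

open Polynomial Module DirectSum

/-- `aeval` commutes with `Matrix.toLinAlgEquiv'`. -/
private lemma aeval_toLin {R : Type} [Field R] {n : ℕ} (c : Matrix (Fin n) (Fin n) R)
    (r : R[X]) :
    aeval (Matrix.toLinAlgEquiv' c : Module.End R (Fin n → R)) r
      = Matrix.toLinAlgEquiv' (aeval c r) := by
  exact aeval_algHom_apply (Matrix.toLinAlgEquiv' :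
      Matrix (Fin n) (Fin n) R ≃ₐ[R] Module.End R (Fin n → R)).toAlgHom c r

/-- There is a vector `v` whose annihilator (as an `R[X]`-module element via `c`) is
contained in the annihilator of the whole module, i.e. `(minpoly R c)`. -/
private lemma exists_good_vector (R : Type) [Field R] (n : ℕ)
    (c : Matrix (Fin n) (Fin n) R) :
    ∃ v : Fin n → R, ∀ r : R[X],
      (aeval (Matrix.toLinAlgEquiv' c : Module.End R (Fin n → R)) r) v = 0 →
        aeval c r = 0 := by
  classical
  set f : Module.End R (Fin n → R) := Matrix.toLinAlgEquiv' c with hf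
  set M := Module.AEval' f with hM
  have hintc : IsIntegral R c := IsIntegral.of_finite R c
  have hm0 : minpoly R c ≠ 0 := minpoly.ne_zero hintc
  have key : ∀ (r : R[X]) (x : M),
      (Module.AEval'.of f).symm (r • x) = aeval f r ((Module.AEval'.of f).symm x) := by
    intro r x
    rw [Module.AEval.of_symm_smul]
    rfl
  have hM0 : ∀ x : M, (minpoly R c) • x = 0 := by
    intro x
    apply (Module.AEval'.of f).symm.injective
    rw [key, map_zero, aeval_toLin, minpoly.aeval, map_zero]
    rfl
  have htor : Module.IsTorsion R[X] M := fun x =>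
    ⟨⟨minpoly R c, mem_nonZeroDivisors_of_ne_zero hm0⟩, hM0 x⟩
  obtain ⟨ι, hι, p, hp, ex, ⟨e⟩⟩ :=
    Module.equiv_directSum_of_isTorsion (R := R[X]) (M := M) htor
  set q : ι → R[X] := fun i => p i ^ ex i with hq
  -- the distinguished element: class of 1 in every component
  set w : ⨁ i : ι, R[X] ⧸ (R[X] ∙ q i) :=
    DFinsupp.equivFunOnFintype.symm (fun i => Submodule.Quotient.mk 1) with hw
  have hwj : ∀ j, w j = Submodule.Quotient.mk 1 := by
    intro j
    rw [hw]
    exact congrFun (DFinsupp.equivFunOnFintype.apply_symm_apply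
      (fun i : ι => (Submodule.Quotient.mk 1 : R[X] ⧸ (R[X] ∙ q i)))) j
  -- r annihilates everything as soon as each q j divides r
  have hann : ∀ r : R[X], (∀ j, q j ∣ r) → aeval c r = 0 := by
    intro r hr
    have hz : ∀ z : (⨁ j : ι, R[X] ⧸ (R[X] ∙ q j)), r • z = 0 := by
      intro z
      refine DFunLike.ext _ _ fun j => ?_
      obtain ⟨s, hs⟩ := Submodule.Quotient.mk_surjective _ (z j)
      rw [DFinsupp.smul_apply, DFinsupp.zero_apply, ← hs, ← Submodule.Quotient.mk_smul,
        Submodule.Quotient.mk_eq_zero, Submodule.mem_span_singleton]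
      obtain ⟨t, rfl⟩ := hr j
      exact ⟨t * s, by simp only [smul_eq_mul]; ring⟩
    have hMz : ∀ x : M, r • x = 0 := by
      intro x
      have h1 := congrArg e.symm (hz (e x))
      rwa [map_smul, e.symm_apply_apply, map_zero] at h1
    have hfr : aeval f r = 0 := by
      apply LinearMap.ext
      intro x
      have h1 := key r (Module.AEval'.of f x)
      rw [hMz, map_zero] at h1
      rw [LinearEquiv.symm_apply_apply] at h1
      rw [LinearMap.zero_apply]
      exact h1.symm
    apply Matrix.toLinAlgEquiv'.injective
    rw [← aeval_toLin, hfr, map_zero]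
  refine ⟨(Module.AEval'.of f).symm (e.symm w), ?_⟩
  intro r hr0
  have h1 : (Module.AEval'.of f).symm (r • e.symm w) = 0 := by rw [key, hr0]
  have h2 : r • e.symm w = 0 := by
    apply (Module.AEval'.of f).symm.injective
    rw [h1, map_zero]
  have h3 : r • w = 0 := by
    have := congrArg e h2
    rwa [map_smul, e.apply_symm_apply, map_zero] at this
  apply hann
  intro j
  have h4 : r • w j = 0 := by
    have := congrArg (fun z => z j) h3
    simpa [DFinsupp.smul_apply, DirectSum.smul_apply] using this
  rw [hwj j, ← Submodule.Quotient.mk_smul, Submodule.Quotient.mk_eq_zero,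
    Submodule.mem_span_singleton] at h4
  obtain ⟨a, ha⟩ := h4
  simp only [smul_eq_mul, mul_one] at ha
  exact ⟨a, by rw [← ha]; ring⟩

set_option synthInstance.maxHeartbeats 400000 in
/-- If the minimal polynomial of `c` equals its characteristic polynomial, then
`R^n ≅ R[c]` as `R[c]`-modules; in particular `R^n` is a cyclic `R[c]`-module. -/
theorem stmt14 (R : Type) [Field R] (n : ℕ) (hn : 0 < n) (c : Matrix (Fin n) (Fin n) R)
    (h : minpoly R c = c.charpoly) :
    letI : Module (Algebra.adjoin R ({c} : Set (Matrix (Fin n) (Fin n) R))) (Fin n → R) :=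
      Module.compHom (Fin n → R)
        ((Matrix.toLinAlgEquiv' :
            Matrix (Fin n) (Fin n) R ≃ₐ[R] Module.End R (Fin n → R)).toAlgHom.toRingHom.comp
          (Algebra.adjoin R ({c} : Set (Matrix (Fin n) (Fin n) R))).val.toRingHom)
    Nonempty ((Fin n → R) ≃ₗ[Algebra.adjoin R ({c} : Set (Matrix (Fin n) (Fin n) R))]
      (Algebra.adjoin R ({c} : Set (Matrix (Fin n) (Fin n) R)))) := by
  classical
  obtain ⟨v, hv⟩ := exists_good_vector R n c
  set f : Module.End R (Fin n → R) := Matrix.toLinAlgEquiv' c with hf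
  set A := Algebra.adjoin R ({c} : Set (Matrix (Fin n) (Fin n) R)) with hA
  letI inst : Module A (Fin n → R) :=
    Module.compHom (Fin n → R)
      ((Matrix.toLinAlgEquiv' :
          Matrix (Fin n) (Fin n) R ≃ₐ[R] Module.End R (Fin n → R)).toAlgHom.toRingHom.comp
        A.val.toRingHom)
  have hsmul : ∀ (a : A) (x : Fin n → R),
      a • x = Matrix.toLinAlgEquiv' (a : Matrix (Fin n) (Fin n) R) x := fun _ _ => rfl
  have hdeg : (minpoly R c).natDegree = n := by
    rw [h, Matrix.charpoly_natDegree_eq_dim, Fintype.card_fin]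
  -- linear independence of v, f v, ..., f^(n-1) v
  have hind : LinearIndependent R (fun i : Fin n => (f ^ (i : ℕ)) v) := by
    rw [Fintype.linearIndependent_iff]
    intro g hg i
    set r : R[X] := ∑ i : Fin n, C (g i) * X ^ (i : ℕ) with hr
    have hre : aeval f r v = 0 := by
      rw [hr, map_sum]
      simpa [Algebra.smul_def] using hg
    have hrlt : r.natDegree < n := by
      have hle : r.natDegree ≤ n - 1 := by
        apply Polynomial.natDegree_sum_le_of_forall_le
        intro i _
        exact le_trans (Polynomial.natDegree_C_mul_X_pow_le _ _) (Nat.le_sub_one_of_lt i.2)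
      omega
    have hr0 : r = 0 := by
      by_contra hne
      have := Polynomial.natDegree_le_of_dvd (minpoly.dvd R c (hv r hre)) hne
      omega
    have := congrArg (fun s => Polynomial.coeff s (i : ℕ)) hr0
    simpa [hr, Polynomial.finset_sum_coeff, Polynomial.coeff_C_mul,
      Polynomial.coeff_X_pow, Fin.val_eq_val] using this
  haveI : Nonempty (Fin n) := Fin.pos_iff_nonempty.mp hn
  have hspan : Submodule.span R (Set.range (fun i : Fin n => (f ^ (i : ℕ)) v)) = ⊤ := by
    apply hind.span_eq_top_of_card_eq_finrank
    simp
  -- the R-linear version of `a ↦ a • v`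
  set ψ : A →ₗ[R] (Fin n → R) :=
    { toFun := fun a => Matrix.toLinAlgEquiv' (a : Matrix (Fin n) (Fin n) R) v
      map_add' := fun a b => by simp
      map_smul' := fun t a => by simp } with hψ
  have hψsurj : Function.Surjective ψ := by
    rw [← LinearMap.range_eq_top, ← top_le_iff, ← hspan, Submodule.span_le]
    rintro x ⟨i, rfl⟩
    refine ⟨⟨c, Algebra.self_mem_adjoin_singleton R c⟩ ^ (i : ℕ), ?_⟩
    have hcoe : ((⟨c, Algebra.self_mem_adjoin_singleton R c⟩ ^ (i : ℕ) : A) :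
        Matrix (Fin n) (Fin n) R) = c ^ (i : ℕ) := by simp
    show Matrix.toLinAlgEquiv' ((⟨c, Algebra.self_mem_adjoin_singleton R c⟩ ^ (i : ℕ) : A) :
        Matrix (Fin n) (Fin n) R) v = (f ^ (i : ℕ)) v
    rw [hcoe, map_pow]
  set φ := LinearMap.toSpanSingleton A (Fin n → R) v with hφ
  have hφψ : ∀ a : A, φ a = ψ a := fun a => rfl
  have hinj : Function.Injective φ := by
    rw [← LinearMap.ker_eq_bot, LinearMap.ker_eq_bot']
    intro a ha
    have hmem : (a : Matrix (Fin n) (Fin n) R) ∈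
        Algebra.adjoin R ({c} : Set (Matrix (Fin n) (Fin n) R)) := a.2
    rw [Algebra.adjoin_singleton_eq_range_aeval, AlgHom.mem_range] at hmem
    obtain ⟨r, hrr⟩ := hmem
    have h0 : aeval f r v = 0 := by
      rw [hf, aeval_toLin, hrr]
      rw [hφψ] at ha
      exact ha
    have hz := hv r h0
    apply Subtype.ext
    rw [← hrr, hz]
    rfl
  have hsurj : Function.Surjective φ := fun x => by
    obtain ⟨a, ha⟩ := hψsurj x
    exact ⟨a, by rw [hφψ]; exact ha⟩
  exact ⟨(LinearEquiv.ofBijective φ ⟨hinj, hsurj⟩).symm⟩
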